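/- Let k ≥ 1 and let G be the k-dimensional hypercube graph Q_k with k additional degree-one vertices attached to each hypercube vertex, where each hypercube edge has weight w + ε and each pendant edge has weight w (for real numbers w > 0, ε > 0). Then the set of all 2^(k−1)·k hypercube edges can be partitioned into k disjoint matchings (giving a k-disjoint matching of weight 2^(k−1)·k·(w+ε)), while the set of all 2^k·k pendant edges forms a k-disjoint matching of weight 2^k·k·w. Hence the ratio of the former to the latter is (w+ε)/(2w), which tends to 1/2 as ε → 0. -/

import Mathlib

open Finset

variable {V : Type*}

/-- A matching of a simple graph `G`: a finite set of edges of `G` such that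
no two distinct edges share a vertex. -/
def IsMatching (G : SimpleGraph V) (M : Finset (Sym2 V)) : Prop :=
  (∀ e ∈ M, e ∈ G.edgeSet) ∧
  ∀ e ∈ M, ∀ f ∈ M, e ≠ f → ∀ v, v ∈ e → v ∉ f

/-- A `k`-disjoint matching: `k` pairwise edge-disjoint matchings of `G`. -/
def IsKDisjointMatching (G : SimpleGraph V) (k : ℕ)
    (Ms : Fin k → Finset (Sym2 V)) : Prop :=
  (∀ i, IsMatching G (Ms i)) ∧ Pairwise fun i j => Disjoint (Ms i) (Ms j)

/-- The weight of a set of edges. -/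
def mweight (w : Sym2 V → ℕ) (M : Finset (Sym2 V)) : ℕ := ∑ e ∈ M, w e

/-- A proper edge coloring with `k` colors of the edge set `F`:
edges sharing a vertex receive distinct colors. -/
def ProperColoringOn (k : ℕ) (F : Finset (Sym2 V)) (c : Sym2 V → Fin k) : Prop :=
  ∀ e ∈ F, ∀ f ∈ F, e ≠ f → (∃ x, x ∈ e ∧ x ∈ f) → c e ≠ c f

/-- Hypercube adjacency: two binary strings of length `k` differing in exactly one
coordinate. -/
def cubeAdj (k : ℕ) (x y : Fin k → Bool) : Prop :=
  ∃ i, x i ≠ y i ∧ ∀ j, j ≠ i → x j = y j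

/-- Vertices: hypercube vertices (`inl`) plus, for each hypercube vertex, `k` private
pendant vertices (`inr (v, i)`). -/
abbrev PendCubeV (k : ℕ) := (Fin k → Bool) ⊕ ((Fin k → Bool) × Fin k)

/-- Adjacency of the hypercube with `k` pendant vertices attached to each vertex. -/
def pendCubeAdj (k : ℕ) : PendCubeV k → PendCubeV k → Prop
  | Sum.inl x, Sum.inl y => cubeAdj k x y
  | Sum.inl x, Sum.inr p => x = p.1
  | Sum.inr p, Sum.inl x => p.1 = x
  | Sum.inr _, Sum.inr _ => False

/-- The hypercube `Q_k` with `k` pendant (degree-one) vertices attached to each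
hypercube vertex. -/
def pendCubeGraph (k : ℕ) : SimpleGraph (PendCubeV k) where
  Adj := pendCubeAdj k
  symm := by
    constructor
    rintro (x | p) (y | q) h
    · obtain ⟨i, h1, h2⟩ := h
      exact ⟨i, Ne.symm h1, fun j hj => (h2 j hj).symm⟩
    · exact h.symm
    · exact h.symm
    · exact h
  loopless := by
    constructor
    rintro (x | p) h
    · obtain ⟨i, h1, _⟩ := h
      exact h1 rfl
    · exact h

instance (k : ℕ) : DecidableRel (pendCubeGraph k).Adj := fun u v =>
  match u, v with
  | Sum.inl x, Sum.inl y =>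
      decidable_of_iff (∃ i, x i ≠ y i ∧ ∀ j, j ≠ i → x j = y j) Iff.rfl
  | Sum.inl x, Sum.inr p => decidable_of_iff (x = p.1) Iff.rfl
  | Sum.inr p, Sum.inl x => decidable_of_iff (p.1 = x) Iff.rfl
  | Sum.inr _, Sum.inr _ => decidable_of_iff False Iff.rfl

/-- Weights: each hypercube edge gets weight `w + ε`, each pendant edge weight `w`. -/
def pendCubeWeight (k : ℕ) (w ε : ℝ) : Sym2 (PendCubeV k) → ℝ :=
  Sym2.lift ⟨fun u v =>
    match u, v with
    | Sum.inl _, Sum.inl _ => w + ε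
    | Sum.inr _, Sum.inr _ => 0
    | _, _ => w,
    by rintro (x | p) (y | q) <;> rfl⟩

/-- Whether both endpoints of an edge are hypercube vertices. -/
def isCubeEdge (k : ℕ) : Sym2 (PendCubeV k) → Bool :=
  Sym2.lift ⟨fun u v => u.isLeft && v.isLeft, by intro a b; exact Bool.and_comm _ _⟩

/-- Whether an edge is a pendant edge (exactly one endpoint is a pendant vertex). -/
def isPendantEdge (k : ℕ) : Sym2 (PendCubeV k) → Bool :=
  Sym2.lift ⟨fun u v => xor u.isLeft v.isLeft, by intro a b; exact Bool.xor_comm _ _⟩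

/-- The real-valued total weight of a set of edges. -/
def rweight {α : Type*} (f : Sym2 α → ℝ) (M : Finset (Sym2 α)) : ℝ := ∑ e ∈ M, f e

namespace PendCubeAux

variable {k : ℕ}

/-- The matching of cube edges in direction `i`. -/
def Ms (k : ℕ) (i : Fin k) : Finset (Sym2 (PendCubeV k)) :=
  (Finset.univ.filter (fun x : Fin k → Bool => x i = false)).image
    (fun x => s(Sum.inl x, Sum.inl (Function.update x i true)))

/-- The matching of pendant edges with pendant index `i`. -/
def Ns (k : ℕ) (i : Fin k) : Finset (Sym2 (PendCubeV k)) :=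
  Finset.univ.image (fun x : Fin k → Bool => s(Sum.inl x, Sum.inr (x, i)))

lemma mem_Ms {i : Fin k} {e : Sym2 (PendCubeV k)} :
    e ∈ Ms k i ↔ ∃ x : Fin k → Bool, x i = false ∧
      e = s(Sum.inl x, Sum.inl (Function.update x i true)) := by
  simp only [Ms, Finset.mem_image, Finset.mem_filter, Finset.mem_univ, true_and]
  exact ⟨fun ⟨x, h1, h2⟩ => ⟨x, h1, h2.symm⟩, fun ⟨x, h1, h2⟩ => ⟨x, h1, h2.symm⟩⟩

lemma mem_Ns {i : Fin k} {e : Sym2 (PendCubeV k)} :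
    e ∈ Ns k i ↔ ∃ x : Fin k → Bool, e = s(Sum.inl x, Sum.inr (x, i)) := by
  simp only [Ns, Finset.mem_image, Finset.mem_univ, true_and]
  exact ⟨fun ⟨x, h2⟩ => ⟨x, h2.symm⟩, fun ⟨x, h2⟩ => ⟨x, h2.symm⟩⟩

lemma update_cancel {x : Fin k → Bool} {i : Fin k} (hx : x i = false) :
    Function.update (Function.update x i true) i false = x := by
  rw [Function.update_idem, ← hx, Function.update_eq_self]

lemma Ms_adj {x : Fin k → Bool} {i : Fin k} (hx : x i = false) :
    (pendCubeGraph k).Adj (Sum.inl x) (Sum.inl (Function.update x i true)) :=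
  ⟨i, by simp [hx], fun j hj => (Function.update_of_ne hj _ _).symm⟩

lemma card_filter_false (i : Fin k) :
    (Finset.univ.filter (fun x : Fin k → Bool => x i = false)).card = 2 ^ (k - 1) := by
  have hkpos : 1 ≤ k := i.pos
  have key : ∀ a b p : ℕ, a = b → a + b = p * 2 → a = p := by
    intro a b p hab habp
    omega
  have h1 : (Finset.univ.filter (fun x : Fin k → Bool => x i = false)).card
      = (Finset.univ.filter (fun x : Fin k → Bool => ¬ (x i = false))).card := by
    refine Finset.card_bij' (fun x _ => Function.update x i true)
      (fun x _ => Function.update x i false) ?_ ?_ ?_ ?_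
    · intro x hx; simp
    · intro x hx; simp
    · intro x hx
      simp only [Finset.mem_filter, Finset.mem_univ, true_and] at hx
      exact update_cancel hx
    · intro x hx
      simp only [Finset.mem_filter, Finset.mem_univ, true_and] at hx
      have hx' : x i = true := by
        cases h : x i
        · exact absurd h hx
        · rfl
      show Function.update (Function.update x i false) i true = x
      rw [Function.update_idem, ← hx', Function.update_eq_self]
  have h2 : (Finset.univ.filter (fun x : Fin k → Bool => x i = false)).card
      + (Finset.univ.filter (fun x : Fin k → Bool => ¬ (x i = false))).card
      = 2 ^ k := by
    rw [Finset.card_filter_add_card_filter_not]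
    simp [Finset.card_univ]
  have h3 : 2 ^ k = 2 ^ (k - 1) * 2 := by
    rw [← pow_succ, Nat.sub_add_cancel hkpos]
  exact key _ _ _ h1 (h2.trans h3)

lemma card_Ms (i : Fin k) : (Ms k i).card = 2 ^ (k - 1) := by
  have hinj : Set.InjOn (fun x : Fin k → Bool =>
      s((Sum.inl x : PendCubeV k), Sum.inl (Function.update x i true)))
      (Finset.univ.filter (fun x : Fin k → Bool => x i = false)) := by
    intro x hx y hy h
    simp only [Finset.coe_filter, Finset.mem_univ, true_and, Set.mem_setOf_eq] at hx hy
    rcases Sym2.eq_iff.mp h with ⟨h1, _⟩ | ⟨h1, h2⟩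
    · exact Sum.inl.inj h1
    · have h1' := Sum.inl.inj h1
      have hxt : x i = true := by rw [h1']; simp
      rw [hx] at hxt
      exact absurd hxt (by simp)
  unfold Ms
  rw [Finset.card_image_of_injOn hinj, card_filter_false]

lemma card_Ns (i : Fin k) : (Ns k i).card = 2 ^ k := by
  rw [Ns, Finset.card_image_of_injective _ ?_]
  · simp [Finset.card_univ]
  · intro x y h
    rcases Sym2.eq_iff.mp h with ⟨h1, _⟩ | ⟨h1, _⟩
    · exact Sum.inl.inj h1
    · exact absurd h1 (by simp)

lemma weight_cube (w ε : ℝ) (x y : Fin k → Bool) :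
    pendCubeWeight k w ε s(Sum.inl x, Sum.inl y) = w + ε := rfl

lemma weight_pend (w ε : ℝ) (x : Fin k → Bool) (p : (Fin k → Bool) × Fin k) :
    pendCubeWeight k w ε s(Sum.inl x, Sum.inr p) = w := rfl

lemma isMatching_Ms (i : Fin k) : IsMatching (pendCubeGraph k) (Ms k i) := by
  constructor
  · intro e he
    obtain ⟨x, hx, rfl⟩ := mem_Ms.mp he
    exact Ms_adj hx
  · intro e he f hf hef v hve hvf
    obtain ⟨x, hx, rfl⟩ := mem_Ms.mp he
    obtain ⟨y, hy, rfl⟩ := mem_Ms.mp hf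
    apply hef
    rcases Sym2.mem_iff.mp hve with rfl | rfl <;>
      rcases Sym2.mem_iff.mp hvf with h | h
    · rw [Sum.inl.inj h]
    · have := Sum.inl.inj h
      have : x i = true := by rw [this]; simp
      rw [hx] at this; exact absurd this (by simp)
    · have := Sum.inl.inj h
      have : y i = true := by rw [← this]; simp
      rw [hy] at this; exact absurd this (by simp)
    · have h' := Sum.inl.inj h
      have hxy : x = y := by
        rw [← update_cancel hx, h', update_cancel hy]
      rw [hxy]

lemma isMatching_Ns (i : Fin k) : IsMatching (pendCubeGraph k) (Ns k i) := by
  constructor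
  · intro e he
    obtain ⟨x, rfl⟩ := mem_Ns.mp he
    exact rfl
  · intro e he f hf hef v hve hvf
    obtain ⟨x, rfl⟩ := mem_Ns.mp he
    obtain ⟨y, rfl⟩ := mem_Ns.mp hf
    apply hef
    rcases Sym2.mem_iff.mp hve with rfl | rfl <;>
      rcases Sym2.mem_iff.mp hvf with h | h
    · rw [Sum.inl.inj h]
    · exact absurd h (by simp)
    · exact absurd h (by simp)
    · simp only [Sum.inr.injEq, Prod.mk.injEq] at h
      rw [h.1]

lemma disjoint_Ms {i j : Fin k} (hij : i ≠ j) : Disjoint (Ms k i) (Ms k j) := by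
  rw [Finset.disjoint_left]
  intro e hei hej
  obtain ⟨x, hx, rfl⟩ := mem_Ms.mp hei
  obtain ⟨y, hy, heq⟩ := mem_Ms.mp hej
  rcases Sym2.eq_iff.mp heq with ⟨h1, h2⟩ | ⟨h1, h2⟩
  · have hxy := Sum.inl.inj h1
    have h2' := Sum.inl.inj h2
    have : Function.update x i true i = Function.update y j true i := by rw [h2']
    rw [Function.update_self, Function.update_of_ne hij, ← hxy, hx] at this
    exact absurd this.symm (by simp)
  · have h1' := Sum.inl.inj h1
    have h2' := Sum.inl.inj h2
    have : x j = true := by rw [h1']; simp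
    have h3 : y j = true := by
      rw [← h2', Function.update_of_ne (Ne.symm hij), this]
    rw [hy] at h3
    exact absurd h3 (by simp)

lemma disjoint_Ns {i j : Fin k} (hij : i ≠ j) : Disjoint (Ns k i) (Ns k j) := by
  rw [Finset.disjoint_left]
  intro e hei hej
  obtain ⟨x, rfl⟩ := mem_Ns.mp hei
  obtain ⟨y, heq⟩ := mem_Ns.mp hej
  rcases Sym2.eq_iff.mp heq with ⟨h1, h2⟩ | ⟨h1, h2⟩
  · exact hij (congrArg Prod.snd (Sum.inr.inj h2))
  · exact absurd h1 (by simp)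

lemma biUnion_Ms :
    Finset.univ.biUnion (Ms k)
      = (pendCubeGraph k).edgeFinset.filter (fun e => isCubeEdge k e) := by
  ext e
  simp only [Finset.mem_biUnion, Finset.mem_univ, true_and, Finset.mem_filter,
    SimpleGraph.mem_edgeFinset]
  constructor
  · rintro ⟨i, he⟩
    obtain ⟨x, hx, rfl⟩ := mem_Ms.mp he
    exact ⟨(SimpleGraph.mem_edgeSet _).mpr (Ms_adj hx), rfl⟩
  · induction e using Sym2.ind with
  | _ u v =>
    rintro ⟨hadj, hcube⟩
    rw [SimpleGraph.mem_edgeSet] at hadj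
    match u, v with
    | Sum.inl x, Sum.inl y =>
      obtain ⟨i, hne, hrest⟩ := hadj
      refine ⟨i, ?_⟩
      have key : ∀ a b : Fin k → Bool, a i = false → b i = true →
          (∀ j, j ≠ i → a j = b j) → b = Function.update a i true := by
        intro a b ha hb hab
        funext j
        by_cases hj : j = i
        · subst hj; rw [hb, Function.update_self]
        · rw [Function.update_of_ne hj]; exact (hab j hj).symm
      cases hx : x i <;> cases hy : y i
      · rw [hx, hy] at hne; exact absurd rfl hne
      · exact mem_Ms.mpr ⟨x, hx, by rw [key x y hx hy hrest]⟩
      · refine mem_Ms.mpr ⟨y, hy, ?_⟩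
        rw [key y x hy hx (fun j hj => (hrest j hj).symm), Sym2.eq_swap]
      · rw [hx, hy] at hne; exact absurd rfl hne
    | Sum.inl x, Sum.inr p => exact absurd hcube (by simp [isCubeEdge])
    | Sum.inr p, Sum.inl x => exact absurd hcube (by simp [isCubeEdge])
    | Sum.inr p, Sum.inr q => exact absurd hadj id

lemma biUnion_Ns :
    Finset.univ.biUnion (Ns k)
      = (pendCubeGraph k).edgeFinset.filter (fun e => isPendantEdge k e) := by
  ext e
  simp only [Finset.mem_biUnion, Finset.mem_univ, true_and, Finset.mem_filter,
    SimpleGraph.mem_edgeFinset]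
  constructor
  · rintro ⟨i, he⟩
    obtain ⟨x, rfl⟩ := mem_Ns.mp he
    exact ⟨(SimpleGraph.mem_edgeSet _).mpr rfl, rfl⟩
  · induction e using Sym2.ind with
  | _ u v =>
    rintro ⟨hadj, hpend⟩
    rw [SimpleGraph.mem_edgeSet] at hadj
    match u, v with
    | Sum.inl x, Sum.inl y => exact absurd hpend (by simp [isPendantEdge])
    | Sum.inl x, Sum.inr p =>
      have hx : x = p.1 := hadj
      exact ⟨p.2, mem_Ns.mpr ⟨p.1, by rw [hx]⟩⟩
    | Sum.inr p, Sum.inl x =>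
      have hx : p.1 = x := hadj
      exact ⟨p.2, mem_Ns.mpr ⟨p.1, by rw [← hx, Sym2.eq_swap]⟩⟩
    | Sum.inr p, Sum.inr q => exact absurd hadj id

lemma rweight_Ms (w ε : ℝ) (i : Fin k) :
    rweight (pendCubeWeight k w ε) (Ms k i) = 2 ^ (k - 1) * (w + ε) := by
  have h : ∀ e ∈ Ms k i, pendCubeWeight k w ε e = w + ε := by
    intro e he
    obtain ⟨x, _, rfl⟩ := mem_Ms.mp he
    rfl
  rw [rweight, Finset.sum_congr rfl h, Finset.sum_const, card_Ms, nsmul_eq_mul]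
  push_cast
  ring

lemma rweight_Ns (w ε : ℝ) (i : Fin k) :
    rweight (pendCubeWeight k w ε) (Ns k i) = 2 ^ k * w := by
  have h : ∀ e ∈ Ns k i, pendCubeWeight k w ε e = w := by
    intro e he
    obtain ⟨x, rfl⟩ := mem_Ns.mp he
    rfl
  rw [rweight, Finset.sum_congr rfl h, Finset.sum_const, card_Ns, nsmul_eq_mul]
  push_cast
  ring

end PendCubeAux

/-- In the hypercube-with-pendants graph with weights `w + ε` on the
`2^(k−1)·k` hypercube edges and `w` on the `2^k·k` pendant edges, the hypercube edges
form a `k`-disjoint matching of weight `2^(k−1)·k·(w+ε)`, the pendant edges form a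
`k`-disjoint matching of weight `2^k·k·w`, their ratio is `(w+ε)/(2w)`, which tends
to `1/2` as `ε → 0`. -/
theorem pendCube_half_approx_example (k : ℕ) (hk : 1 ≤ k) (w ε : ℝ)
    (hw : 0 < w) (he : 0 < ε) :
    (((pendCubeGraph k).edgeFinset.filter (fun e => isCubeEdge k e)).card
        = 2 ^ (k - 1) * k) ∧
    (((pendCubeGraph k).edgeFinset.filter (fun e => isPendantEdge k e)).card
        = 2 ^ k * k) ∧
    (∃ Ms : Fin k → Finset (Sym2 (PendCubeV k)),
      IsKDisjointMatching (pendCubeGraph k) k Ms ∧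
      Finset.univ.biUnion Ms
        = (pendCubeGraph k).edgeFinset.filter (fun e => isCubeEdge k e) ∧
      ∑ i, rweight (pendCubeWeight k w ε) (Ms i)
        = (2 ^ (k - 1) * k : ℝ) * (w + ε)) ∧
    (∃ Ns : Fin k → Finset (Sym2 (PendCubeV k)),
      IsKDisjointMatching (pendCubeGraph k) k Ns ∧
      Finset.univ.biUnion Ns
        = (pendCubeGraph k).edgeFinset.filter (fun e => isPendantEdge k e) ∧
      ∑ i, rweight (pendCubeWeight k w ε) (Ns i)
        = (2 ^ k * k : ℝ) * w) ∧
    ((2 ^ (k - 1) * k : ℝ) * (w + ε) / ((2 ^ k * k : ℝ) * w) = (w + ε) / (2 * w)) ∧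
    Filter.Tendsto (fun ε' : ℝ => (w + ε') / (2 * w)) (nhds 0) (nhds (1 / 2)) := by
  open PendCubeAux in
  have hdisjM : ∀ i ∈ Finset.univ, ∀ j ∈ Finset.univ, i ≠ j →
      Disjoint (Ms k i) (Ms k j) := fun i _ j _ hij => disjoint_Ms hij
  have hdisjN : ∀ i ∈ Finset.univ, ∀ j ∈ Finset.univ, i ≠ j →
      Disjoint (Ns k i) (Ns k j) := fun i _ j _ hij => disjoint_Ns hij
  refine ⟨?_, ?_, ?_, ?_, ?_, ?_⟩
  · rw [← biUnion_Ms, Finset.card_biUnion hdisjM]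
    simp only [card_Ms, Finset.sum_const, Finset.card_univ, Fintype.card_fin,
      smul_eq_mul]
    ring
  · rw [← biUnion_Ns, Finset.card_biUnion hdisjN]
    simp only [card_Ns, Finset.sum_const, Finset.card_univ, Fintype.card_fin,
      smul_eq_mul]
    ring
  · refine ⟨Ms k, ⟨isMatching_Ms, fun i j hij => disjoint_Ms hij⟩, biUnion_Ms, ?_⟩
    simp only [rweight_Ms, Finset.sum_const, Finset.card_univ, Fintype.card_fin,
      nsmul_eq_mul]
    ring
  · refine ⟨Ns k, ⟨isMatching_Ns, fun i j hij => disjoint_Ns hij⟩, biUnion_Ns, ?_⟩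
    simp only [rweight_Ns, Finset.sum_const, Finset.card_univ, Fintype.card_fin,
      nsmul_eq_mul]
    ring
  · have hk2 : (2 : ℝ) ^ k = 2 ^ (k - 1) * 2 := by
      rw [← pow_succ]
      congr 1
      omega
    have hkne : (k : ℝ) ≠ 0 := Nat.cast_ne_zero.mpr (by omega)
    have hpne : (2 : ℝ) ^ (k - 1) ≠ 0 := by positivity
    rw [hk2]
    field_simp
  · have h : Filter.Tendsto (fun ε' : ℝ => (w + ε') / (2 * w)) (nhds 0)
      (nhds ((w + 0) / (2 * w))) :=
      (Filter.Tendsto.const_add w Filter.tendsto_id).div_const _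
    have hval : (w + 0) / (2 * w) = 1 / 2 := by
      rw [add_zero]
      field_simp
    rwa [hval] at h
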